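/- arXiv:math/0403413 — 2 statements merged into one kernel-verified Lean document; each statement's English description precedes it below -/
import Mathlib

section
/- Let l be a prime, q coprime to l with multiplicative order r modulo l, and let the group G = (Z/r)^m ⋊ S_m act on R = F_l[η_1, …, η_m] as follows: the i-th generator of (Z/r)^m sends η_i to q·η_i and fixes the other variables, and S_m permutes the variables. Then the ring of invariants R^G is the polynomial ring F_l[e_1, …, e_m], where e_j is the j-th elementary symmetric polynomial in η_1^r, …, η_m^r. -/
open MvPolynomial

variable {K : Type*} [Field K] {m : ℕ}

lemma my_prod_smul {ι α β : Type*} [CommMonoid β] [CommMonoid α] [MulAction α β]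
    [IsScalarTower α β β] [SMulCommClass α β β] (s : Finset ι) (b : ι → α) (f : ι → β) :
    ∏ i ∈ s, b i • f i = (∏ i ∈ s, b i) • ∏ i ∈ s, f i := by
  induction s using Finset.cons_induction_on with
  | empty => simp
  | cons _ _ hj ih => rw [Finset.prod_cons, ih, smul_mul_smul_comm, ← Finset.prod_cons hj,
      ← Finset.prod_cons hj]

lemma expand_monomial_smul (r : ℕ) (d : Fin m →₀ ℕ) (a : K) :
    expand r (monomial d a) = monomial (r • d) a := by
  rw [expand_monomial, monomial_eq, Finsupp.prod]

lemma coeff_expand_smul {r : ℕ} (hr : r ≠ 0) (p : MvPolynomial (Fin m) K) (d : Fin m →₀ ℕ) :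
    coeff (r • d) (expand r p) = coeff d p := by
  have hiff : ∀ t : Fin m →₀ ℕ, r • t = r • d ↔ t = d := by
    intro t
    constructor
    · intro h
      ext i
      have := DFunLike.congr_fun h i
      simp only [Finsupp.smul_apply, smul_eq_mul] at this
      exact Nat.eq_of_mul_eq_mul_left (Nat.pos_of_ne_zero hr) this
    · rintro rfl; rfl
  conv_lhs => rw [p.as_sum]
  rw [map_sum]
  simp_rw [expand_monomial_smul]
  rw [coeff_sum]
  have : ∀ t ∈ p.support, coeff (r • d) (monomial (r • t) (coeff t p))
      = if t = d then coeff t p else 0 := by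
    intro t _
    rw [coeff_monomial]
    simp only [hiff]
  rw [Finset.sum_congr rfl this, Finset.sum_ite_eq' p.support d (fun t => coeff t p)]
  by_cases h : d ∈ p.support
  · rw [if_pos h]
  · rw [if_neg h, (notMem_support_iff.mp h)]

lemma expand_inj {r : ℕ} (hr : r ≠ 0) :
    Function.Injective (expand r : MvPolynomial (Fin m) K →ₐ[K] MvPolynomial (Fin m) K) := by
  rw [injective_iff_map_eq_zero]
  intro p hp
  ext d
  rw [coeff_zero, ← coeff_expand_smul hr p d, hp, coeff_zero]

lemma scale_monomial (c : K) (i : Fin m) (d : Fin m →₀ ℕ) (a : K) :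
    aeval (Function.update X i (c • X i)) (monomial d a) =
      monomial d (c ^ d i * a) := by
  have hupdate : Function.update X i (c • X i) =
      fun n : Fin m => (if n = i then c else 1) • (X n : MvPolynomial (Fin m) K) := by
    funext n
    rcases eq_or_ne n i with rfl | h
    · simp
    · simp [Function.update_of_ne h, h]
  rw [aeval_monomial, hupdate]
  simp_rw [smul_pow]
  rw [Finsupp.prod, my_prod_smul]
  have hs : (∏ n ∈ d.support, (if n = i then c else 1) ^ d n) = c ^ d i := by
    rw [Finset.prod_eq_single i (fun b _ hb => by rw [if_neg hb, one_pow])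
      (fun hi => by rw [if_pos rfl, Finsupp.notMem_support_iff.mp hi, pow_zero]), if_pos rfl]
  rw [hs, ← smul_eq_mul (a := c ^ d i), ← smul_monomial, monomial_eq, algebraMap_eq,
    mul_smul_comm, Finsupp.prod]

lemma coeff_scale (c : K) (i : Fin m) (p : MvPolynomial (Fin m) K) (d : Fin m →₀ ℕ) :
    coeff d (aeval (Function.update X i (c • X i)) p) = c ^ d i * coeff d p := by
  conv_lhs => rw [p.as_sum]
  rw [map_sum]
  simp_rw [scale_monomial]
  rw [coeff_sum]
  have : ∀ t ∈ p.support, coeff d (monomial t (c ^ t i * coeff t p))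
      = if t = d then c ^ d i * coeff t p else 0 := by
    intro t _
    rw [coeff_monomial]
    split_ifs with h
    · rw [h]
    · rfl
  rw [Finset.sum_congr rfl this, Finset.sum_ite_eq' p.support d]
  by_cases h : d ∈ p.support
  · rw [if_pos h]
  · rw [if_neg h, (notMem_support_iff.mp h), mul_zero]


/-- the ring of invariants of the wreath-product action on
`F_l[η₁,…,η_m]` is the polynomial ring on the elementary symmetric functions of
the `η_i^r`. -/
theorem stmt_8 (l : ℕ) (hl : l.Prime) (q : ℤ) (hq : IsCoprime q (l : ℤ))
    (r : ℕ) (hr : r = orderOf (q : ZMod l)) (m : ℕ)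
    (φ : Fin m → (MvPolynomial (Fin m) (ZMod l) →ₐ[ZMod l] MvPolynomial (Fin m) (ZMod l)))
    (hφ : ∀ i, φ i = aeval (Function.update X i ((q : ZMod l) • X i)))
    (e : Fin m → MvPolynomial (Fin m) (ZMod l))
    (he : ∀ j : Fin m, e j = aeval (fun i : Fin m => X i ^ r)
      (esymm (Fin m) (ZMod l) (j + 1))) :
    (∀ p : MvPolynomial (Fin m) (ZMod l),
      ((∀ i, φ i p = p) ∧ ∀ σ : Equiv.Perm (Fin m), rename σ p = p) ↔
        p ∈ Algebra.adjoin (ZMod l) (Set.range e)) ∧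
      AlgebraicIndependent (ZMod l) e := by
  haveI : Fact l.Prime := ⟨hl⟩
  set c : ZMod l := (q : ZMod l) with hcdef
  -- c is a unit
  have hc_unit : IsUnit c := by
    obtain ⟨u, v, huv⟩ := hq
    have h1 : (u : ZMod l) * c + (v : ZMod l) * ((l : ℤ) : ZMod l) = 1 := by
      rw [hcdef, ← Int.cast_mul, ← Int.cast_mul, ← Int.cast_add, huv, Int.cast_one]
    rw [Int.cast_natCast, ZMod.natCast_self, mul_zero, add_zero] at h1
    exact IsUnit.of_mul_eq_one (a := c) _ (by rw [mul_comm]; exact h1)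
  have hr0 : r ≠ 0 := by
    rw [hr]
    have h2 : orderOf hc_unit.unit ≠ 0 := (orderOf_pos _).ne'
    rwa [← orderOf_units, hc_unit.unit_spec] at h2
  have hcr : c ^ r = 1 := by rw [hr]; exact pow_orderOf_eq_one c
  -- expand r = aeval (X ^ r)
  have hEF : (expand r : MvPolynomial (Fin m) (ZMod l) →ₐ[ZMod l] _)
      = aeval (fun i : Fin m => X i ^ r) := by
    apply algHom_ext; intro j; rw [expand_X, aeval_X]
  have he' : ∀ j, e j = expand r (esymm (Fin m) (ZMod l) (j + 1)) := fun j =>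
    (he j).trans (DFunLike.congr_fun hEF _).symm
  -- φ i fixes the image of expand r
  have hφE : ∀ (i : Fin m) (p' : MvPolynomial (Fin m) (ZMod l)),
      φ i (expand r p') = expand r p' := by
    intro i p'
    have h3 : (φ i).comp (expand r) = (expand r : MvPolynomial (Fin m) (ZMod l) →ₐ[ZMod l] _) := by
      apply algHom_ext
      intro j
      rw [AlgHom.comp_apply, expand_X, hφ i, map_pow, aeval_X]
      rcases eq_or_ne j i with rfl | h
      · rw [Function.update_self, smul_pow, hcr, one_smul]
      · rw [Function.update_of_ne h]
    exact DFunLike.congr_fun h3 p'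
  -- rename σ fixes each e j
  have hrenE : ∀ (σ : Equiv.Perm (Fin m)) (j : Fin m), rename σ (e j) = e j := by
    intro σ j
    rw [he' j, rename_expand, (esymm_isSymmetric (Fin m) (ZMod l) (j + 1) σ :), ← he' j]
  have hφe : ∀ (i j : Fin m), φ i (e j) = e j := fun i j => by
    rw [he' j]; exact hφE i _
  -- injectivity of aeval esymm
  have hinj2 : Function.Injective (aeval (fun j : Fin m => esymm (Fin m) (ZMod l) (j + 1)) :
      MvPolynomial (Fin m) (ZMod l) →ₐ[ZMod l] MvPolynomial (Fin m) (ZMod l)) := by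
    intro a b hab
    apply (esymmAlgHom_fin_bijective (ZMod l) m).injective
    apply Subtype.coe_injective
    show ((esymmAlgHom (Fin m) (ZMod l) m) a).val = ((esymmAlgHom (Fin m) (ZMod l) m) b).val
    rw [esymmAlgHom_apply, esymmAlgHom_apply]
    exact hab
  have hcomp : (aeval e : MvPolynomial (Fin m) (ZMod l) →ₐ[ZMod l] _)
      = (expand r).comp (aeval fun j : Fin m => esymm (Fin m) (ZMod l) (j + 1)) := by
    apply algHom_ext; intro j
    rw [aeval_X, AlgHom.comp_apply, aeval_X, he' j]
  constructor
  · intro p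
    rw [Algebra.adjoin_range_eq_range_aeval, AlgHom.mem_range]
    constructor
    · rintro ⟨hinv1, hinv2⟩
      have hdvd : ∀ t ∈ p.support, ∀ i, r ∣ t i := by
        intro t ht i
        have h4 := congrArg (coeff t) (hinv1 i)
        rw [hφ i, coeff_scale] at h4
        have h5 : c ^ t i = 1 := by
          have h6 : coeff t p ≠ 0 := mem_support_iff.mp ht
          have := mul_right_cancel₀ h6 (h4.trans (one_mul (coeff t p)).symm)
          exact this
        rw [hr]
        exact orderOf_dvd_of_pow_eq_one h5
      set p' : MvPolynomial (Fin m) (ZMod l) :=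
        ∑ t ∈ p.support, monomial (Finsupp.mapRange (· / r) (Nat.zero_div r) t) (coeff t p)
        with hp'def
      have hp' : expand r p' = p := by
        rw [hp'def, map_sum]
        have h7 : ∀ t ∈ p.support,
            expand r (monomial (Finsupp.mapRange (· / r) (Nat.zero_div r) t) (coeff t p))
            = monomial t (coeff t p) := by
          intro t ht
          rw [expand_monomial_smul]
          have h8 : r • Finsupp.mapRange (· / r) (Nat.zero_div r) t = t := by
            ext i
            rw [Finsupp.smul_apply, Finsupp.mapRange_apply, smul_eq_mul]
            exact Nat.mul_div_cancel' (hdvd t ht i)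
          rw [h8]
        rw [Finset.sum_congr rfl h7, ← as_sum]
      have hsym : IsSymmetric p' := by
        intro σ
        apply _root_.expand_inj hr0
        rw [← rename_expand, hp', hinv2 σ, ← hp']
      obtain ⟨P, hP⟩ := (esymmAlgHom_fin_bijective (ZMod l) m).surjective ⟨p', hsym⟩
      refine ⟨P, ?_⟩
      have hPv : aeval (fun j : Fin m => esymm (Fin m) (ZMod l) (j + 1)) P = p' := by
        have := congrArg Subtype.val hP
        rwa [esymmAlgHom_apply] at this
      rw [← hp', ← hPv]
      exact (DFunLike.congr_fun hcomp P).symm ▸ rfl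
    · rintro ⟨P, rfl⟩
      constructor
      · intro i
        rw [comp_aeval_apply]
        exact congrArg (fun f => aeval f P) (funext fun j => hφe i j)
      · intro σ
        rw [comp_aeval_apply]
        exact congrArg (fun f => aeval f P) (funext fun j => hrenE σ j)
  · rw [algebraicIndependent_iff_injective_aeval, hcomp, AlgHom.coe_comp]
    exact (_root_.expand_inj hr0).comp hinj2
end

section
/- Let l be an odd prime, q a prime power coprime to l, r the multiplicative order of q modulo l, and write n = rm + e with 0 ≤ e < r. Then the index of the subgroup (F_{q^r}^×) ≀ S_m inside GL(n, F_q) is coprime to l, where the wreath product embeds via the direct sum of m copies of the regular representation of F_{q^r} over F_q together with an e-dimensional trivial summand. -/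
open Finset

private lemma padicValNat_prod {p : ℕ} [hp : Fact p.Prime] {ι : Type*} (s : Finset ι) (f : ι → ℕ)
    (h : ∀ i ∈ s, f i ≠ 0) :
    padicValNat p (∏ i ∈ s, f i) = ∑ i ∈ s, padicValNat p (f i) := by
  classical
  induction s using Finset.cons_induction with
  | empty => simp
  | cons a s ha ih =>
    rw [Finset.prod_cons, Finset.sum_cons,
      padicValNat.mul (h a (mem_cons_self a s))
        (Finset.prod_ne_zero_iff.mpr fun i hi => h i (mem_cons_of_mem hi)),
      ih fun i hi => h i (mem_cons_of_mem hi)]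

/-- any subgroup of `GL(n, F_q)` with the cardinality of the
wreath product `(F_{q^r}ˣ) ≀ S_m` (in particular the embedded copy described in
the paper) has index coprime to `l`. -/
theorem stmt_16 (l : ℕ) (hl : l.Prime) (hodd : Odd l) (q : ℕ) (hq : IsPrimePow q)
    (hlq : ¬ l ∣ q) (r : ℕ) (hr : r = orderOf (q : ZMod l))
    (n m e : ℕ) (hn : n = r * m + e) (he : e < r)
    (F : Type) [Field F] [Fintype F] (hF : Fintype.card F = q)
    (H : Subgroup (GL (Fin n) F))
    (hH : Nat.card H = (q ^ r - 1) ^ m * Nat.factorial m) :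
    ¬ l ∣ H.index := by
  haveI := Fact.mk hl
  haveI : NeZero l := ⟨hl.pos.ne'⟩
  have hq2 : 2 ≤ q := hq.two_le
  -- q is a unit mod l
  have hq0 : (q : ZMod l) ≠ 0 := by
    rw [Ne, ZMod.natCast_eq_zero_iff]; exact hlq
  have hlqu : IsUnit (q : ZMod l) := isUnit_iff_ne_zero.mpr hq0
  have hrpos : 0 < r := by
    obtain ⟨u, hu⟩ := hlqu
    rw [hr, ← hu, orderOf_units]
    exact orderOf_pos u
  have hdvd : l ∣ q ^ r - 1 := by
    have h1 : (q : ZMod l) ^ r = 1 := by rw [hr]; exact pow_orderOf_eq_one _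
    have h2 : ((q ^ r - 1 : ℕ) : ZMod l) = 0 := by
      rw [Nat.cast_sub (Nat.one_le_pow _ _ (by omega))]
      push_cast
      rw [h1, sub_self]
    exact (ZMod.natCast_eq_zero_iff _ _).mp h2
  have hlqr : ¬ l ∣ q ^ r := fun h => hlq (hl.dvd_of_dvd_pow h)
  have hqr1 : 1 < q ^ r := Nat.one_lt_pow hrpos.ne' hq2
  have hpow1 : ∀ j : ℕ, (1 : ℕ) ≤ q ^ j := fun j => Nat.one_le_pow _ _ (by omega)
  -- LTE
  have key : ∀ k : ℕ, k ≠ 0 →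
      padicValNat l (q ^ (r * k) - 1) = padicValNat l (q ^ r - 1) + padicValNat l k := by
    intro k hk
    have := padicValNat.pow_sub_pow (p := l) (x := q ^ r) (y := 1) hodd hqr1
      (by simpa using hdvd) hlqr hk
    simpa [pow_mul, one_pow] using this
  have hzero : ∀ j : ℕ, ¬ r ∣ j → padicValNat l (q ^ j - 1) = 0 := by
    intro j hj
    apply padicValNat.eq_zero_of_not_dvd
    intro hdj
    apply hj
    rw [hr]
    apply orderOf_dvd_of_pow_eq_one
    have h2 : ((q ^ j - 1 : ℕ) : ZMod l) = 0 := (ZMod.natCast_eq_zero_iff _ _).mpr hdj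
    rw [Nat.cast_sub (hpow1 j)] at h2
    push_cast at h2
    exact sub_eq_zero.mp h2
  -- value on GL card
  have hGL : Nat.card (GL (Fin n) F) = ∏ i ∈ range n, (q ^ n - q ^ i) := by
    rw [Matrix.card_GL_field, hF, ← Fin.prod_univ_eq_prod_range]
  have hterm : ∀ i ∈ range n, q ^ n - q ^ i = q ^ i * (q ^ (n - i) - 1) := by
    intro i hi
    rw [Nat.mul_sub, mul_one, ← pow_add]
    congr 2
    have := mem_range.mp hi
    omega
  have htermne : ∀ i ∈ range n, q ^ n - q ^ i ≠ 0 := by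
    intro i hi
    have : q ^ i < q ^ n := Nat.pow_lt_pow_right (by omega) (mem_range.mp hi)
    omega
  have hvGL : padicValNat l (Nat.card (GL (Fin n) F)) = ∑ j ∈ Icc 1 n, padicValNat l (q ^ j - 1) := by
    rw [hGL, padicValNat_prod _ _ htermne]
    have h1 : ∀ i ∈ range n, padicValNat l (q ^ n - q ^ i) = padicValNat l (q ^ (n - i) - 1) := by
      intro i hi
      rw [hterm i hi, padicValNat.mul (pow_ne_zero _ (by omega)) (by have h2 : 1 < q ^ (n - i) := Nat.one_lt_pow (by have := mem_range.mp hi; omega) hq2; omega),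
        padicValNat.eq_zero_of_not_dvd (fun h => hlq (hl.dvd_of_dvd_pow h)), zero_add]
    rw [Finset.sum_congr rfl h1]
    refine Finset.sum_nbij' (fun a => n - a) (fun b => n - b) ?_ ?_ ?_ ?_ ?_
    · intro a ha
      have := mem_range.mp ha
      simp only [mem_Icc]
      omega
    · intro b hb
      simp only [mem_Icc] at hb
      simp only [mem_range]
      omega
    · intro a ha
      have := mem_range.mp ha
      omega
    · intro b hb
      simp only [mem_Icc] at hb
      omega
    · intro a ha
      rfl
  -- restrict sum to multiples of r
  have hinj : ∀ x ∈ Icc 1 m, ∀ y ∈ Icc 1 m, r * x = r * y → x = y := by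
    intro a _ b _ h
    exact Nat.eq_of_mul_eq_mul_left hrpos h
  have himg : ∑ j ∈ Icc 1 n, padicValNat l (q ^ j - 1)
      = ∑ k ∈ Icc 1 m, padicValNat l (q ^ (r * k) - 1) := by
    calc ∑ j ∈ Icc 1 n, padicValNat l (q ^ j - 1)
        = ∑ j ∈ (Icc 1 m).image (fun k => r * k), padicValNat l (q ^ j - 1) := by
          apply (Finset.sum_subset ?_ ?_).symm
          · intro x hx
            simp only [mem_image, mem_Icc] at hx ⊢
            obtain ⟨k, ⟨hk1, hk2⟩, rfl⟩ := hx
            constructor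
            · nlinarith
            · calc r * k ≤ r * m := Nat.mul_le_mul_left r hk2
                _ ≤ n := by omega
          · intro x hx hnx
            apply hzero
            intro hrx
            apply hnx
            obtain ⟨k, rfl⟩ := hrx
            simp only [mem_Icc] at hx
            simp only [mem_image, mem_Icc]
            refine ⟨k, ⟨?_, ?_⟩, rfl⟩
            · rcases Nat.eq_zero_or_pos k with rfl | h
              · simp at hx
              · exact h
            · by_contra h
              push_neg at h
              have h2 : r * (m + 1) ≤ r * k := Nat.mul_le_mul_left r h
              rw [Nat.mul_add, mul_one] at h2
              omega
      _ = ∑ k ∈ Icc 1 m, padicValNat l (q ^ (r * k) - 1) := Finset.sum_image hinj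
  -- evaluate
  have hmfac : padicValNat l (Nat.factorial m) = ∑ k ∈ Icc 1 m, padicValNat l k := by
    rw [← Finset.prod_Ico_id_eq_factorial, show Ico 1 (m+1) = Icc 1 m by rfl]
    exact padicValNat_prod _ _ (by intro i hi; simp only [mem_Icc] at hi; omega)
  have hsum : ∑ k ∈ Icc 1 m, padicValNat l (q ^ (r * k) - 1)
      = m * padicValNat l (q ^ r - 1) + padicValNat l (Nat.factorial m) := by
    rw [Finset.sum_congr rfl (fun k hk => key k (by simp only [mem_Icc] at hk; omega)),
      Finset.sum_add_distrib, Finset.sum_const, Nat.card_Icc, Nat.add_sub_cancel, smul_eq_mul,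
      hmfac]
  -- value on H card
  have hqr0 : q ^ r - 1 ≠ 0 := by omega
  have hvH : padicValNat l (Nat.card H) = m * padicValNat l (q ^ r - 1) + padicValNat l (Nat.factorial m) := by
    rw [hH, padicValNat.mul (pow_ne_zero _ hqr0) (Nat.factorial_ne_zero m),
      padicValNat.pow _ _]
  -- conclude
  have hGLH : padicValNat l (Nat.card (GL (Fin n) F)) = padicValNat l (Nat.card H) := by
    rw [hvGL, himg, hsum, hvH]
  have hHne : Nat.card H ≠ 0 := by
    rw [hH]
    exact mul_ne_zero (pow_ne_zero _ hqr0) (Nat.factorial_ne_zero m)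
  have hGLne : Nat.card (GL (Fin n) F) ≠ 0 := by
    rw [hGL]
    exact Finset.prod_ne_zero_iff.mpr htermne
  have hmul : Nat.card H * H.index = Nat.card (GL (Fin n) F) := H.card_mul_index
  have hIne : H.index ≠ 0 := by
    intro h
    rw [h, mul_zero] at hmul
    exact hGLne hmul.symm
  have hvI : padicValNat l H.index = 0 := by
    have : padicValNat l (Nat.card H) + padicValNat l H.index = padicValNat l (Nat.card H) := by
      rw [← padicValNat.mul hHne hIne, hmul, hGLH]
    omega
  have := (padicValNat.eq_zero_iff (p := l) (n := H.index)).mp hvI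
  rcases this with h | h | h
  · exact absurd h hl.one_lt.ne'
  · exact absurd h hIne
  · exact h
end
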